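/- Let d, K, N be positive integers with K ≤ d, and let X_1, …, X_N ∈ ℝ^{d×K} be real matrices with orthonormal columns (X_nᵀ X_n = I_K for each n) representing an equi-isoclinic family: there exists c with 0 ≤ c < 1 such that (X_mᵀ X_n)ᵀ (X_mᵀ X_n) = c² · I_K for every pair m ≠ n. Then N ≤ d(d + 1)/2 − K(K + 1)/2 + 1. -/

import Mathlib

open scoped Matrix
open Module

set_option maxHeartbeats 1000000
set_option synthInstance.maxHeartbeats 1000000

/-- Index type for entries on or above the diagonal. -/
abbrev SymIx (n : ℕ) := {p : Fin n × Fin n // p.1 ≤ p.2}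

/-- Build a symmetric matrix from its upper-triangular entries. -/
def symMk (n : ℕ) : (SymIx n → ℝ) →ₗ[ℝ] Matrix (Fin n) (Fin n) ℝ where
  toFun f := Matrix.of fun i j =>
    if h : i ≤ j then f ⟨(i, j), h⟩ else f ⟨(j, i), le_of_not_ge h⟩
  map_add' f g := by
    ext i j
    dsimp only [Matrix.of_apply, Matrix.add_apply, Pi.add_apply]
    split_ifs <;> rfl
  map_smul' r f := by
    ext i j
    dsimp only [Matrix.of_apply, Matrix.smul_apply, Pi.smul_apply, RingHom.id_apply]
    split_ifs <;> rfl

/-- Read off the upper-triangular entries of a matrix. -/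
def symCo (n : ℕ) : Matrix (Fin n) (Fin n) ℝ →ₗ[ℝ] (SymIx n → ℝ) where
  toFun A := fun q => A q.1.1 q.1.2
  map_add' A B := rfl
  map_smul' r A := rfl

lemma symMk_transpose (n : ℕ) (f : SymIx n → ℝ) : (symMk n f)ᵀ = symMk n f := by
  ext i j
  show (symMk n f) j i = (symMk n f) i j
  dsimp only [symMk, LinearMap.coe_mk, AddHom.coe_mk, Matrix.of_apply]
  split_ifs with h1 h2 h2
  · have : j = i := le_antisymm h1 h2
    subst this; rfl
  · rfl
  · rfl
  · exact absurd (le_of_not_ge h1) h2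

lemma symCo_symMk (n : ℕ) (g : SymIx n → ℝ) : symCo n (symMk n g) = g := by
  funext q
  show (symMk n g) q.1.1 q.1.2 = g q
  dsimp only [symMk, LinearMap.coe_mk, AddHom.coe_mk, Matrix.of_apply]
  rw [dif_pos q.2]

lemma symMk_symCo (n : ℕ) {A : Matrix (Fin n) (Fin n) ℝ} (hA : Aᵀ = A) :
    symMk n (symCo n A) = A := by
  ext i j
  show (symMk n (symCo n A)) i j = A i j
  dsimp only [symMk, symCo, LinearMap.coe_mk, AddHom.coe_mk, Matrix.of_apply]
  split_ifs with h
  · rfl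
  · exact congrFun (congrFun hA i) j

lemma card_pairs (n : ℕ) :
    2 * Fintype.card (SymIx n) = n * (n + 1) := by
  have e : SymIx n ≃ Σ j : Fin n, Fin (j.1 + 1) :=
    { toFun := fun p => ⟨p.1.2, ⟨p.1.1.1, Nat.lt_succ_of_le p.2⟩⟩
      invFun := fun x => ⟨(⟨x.2.1, lt_of_lt_of_le x.2.isLt x.1.isLt⟩, x.1),
        Fin.mk_le_of_le_val (Nat.lt_succ_iff.mp x.2.isLt)⟩
      left_inv := fun p => rfl
      right_inv := fun x => rfl }
  rw [Fintype.card_congr e, Fintype.card_sigma]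
  simp only [Fintype.card_fin]
  rw [Fin.sum_univ_eq_sum_range (fun i => i + 1) n]
  rw [Finset.sum_add_distrib, Finset.sum_const, Finset.card_range, smul_eq_mul, mul_one]
  have := Finset.sum_range_id_mul_two n
  cases n with
  | zero => simp
  | succ m =>
    simp only [Nat.add_sub_cancel] at this
    nlinarith [this]

/-- For square real matrices, `AᵀA = c² I` implies `AAᵀ = c² I`. -/
lemma mul_transpose_of_transpose_mul {K : ℕ} {A : Matrix (Fin K) (Fin K) ℝ} {c : ℝ}
    (h : Aᵀ * A = (c ^ 2) • 1) : A * Aᵀ = (c ^ 2) • 1 := by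
  rcases eq_or_ne c 0 with hc | hc
  · subst hc
    simp only [ne_eq, OfNat.ofNat_ne_zero, not_false_eq_true, zero_pow, zero_smul] at h ⊢
    have hA : A = 0 := by
      have h2 := Matrix.conjTranspose_mul_self_eq_zero (A := A)
      rw [← h2]
      have h3 : Aᴴ = Aᵀ := by ext i j; simp [Matrix.conjTranspose_apply]
      rw [h3, h]
    simp [hA]
  · have hc2 : c ^ 2 ≠ 0 := pow_ne_zero _ hc
    have h1 : ((c ^ 2)⁻¹ • Aᵀ) * A = 1 := by
      rw [Matrix.smul_mul, h, smul_smul, inv_mul_cancel₀ hc2, one_smul]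
    have h2 : A * ((c ^ 2)⁻¹ • Aᵀ) = 1 := mul_eq_one_comm.mp h1
    rw [Matrix.mul_smul] at h2
    calc A * Aᵀ = (c ^ 2) • ((c ^ 2)⁻¹ • (A * Aᵀ)) := by
          rw [smul_smul, mul_inv_cancel₀ hc2, one_smul]
      _ = (c ^ 2) • 1 := by rw [h2]

lemma proj_indep (d K N : ℕ) (hK : 0 < K)
    (X : Fin N → Matrix (Fin d) (Fin K) ℝ)
    (hX : ∀ n, (X n)ᵀ * X n = 1)
    (c : ℝ) (hc0 : 0 ≤ c) (hc1 : c < 1)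
    (hiso : ∀ m n : Fin N, m ≠ n →
      ((X m)ᵀ * X n)ᵀ * ((X m)ᵀ * X n) = (c ^ 2) • (1 : Matrix (Fin K) (Fin K) ℝ)) :
    LinearIndependent ℝ (fun n => X n * (X n)ᵀ) := by
  set P : Fin N → Matrix (Fin d) (Fin d) ℝ := fun n => X n * (X n)ᵀ with hP
  have tr_same : ∀ m, (P m * P m).trace = (K : ℝ) := by
    intro m
    have : P m * P m = X m * (X m)ᵀ := by
      rw [hP]
      calc (X m * (X m)ᵀ) * (X m * (X m)ᵀ)
          = X m * ((X m)ᵀ * X m) * (X m)ᵀ := by simp only [Matrix.mul_assoc]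
        _ = X m * (X m)ᵀ := by rw [hX m]; simp [Matrix.mul_one]
    rw [this, Matrix.trace_mul_comm, hX m, Matrix.trace_one, Fintype.card_fin]
  have tr_diff : ∀ m n, m ≠ n → (P m * P n).trace = c ^ 2 * (K : ℝ) := by
    intro m n hmn
    have h1 : P m * P n = X m * (((X m)ᵀ * X n) * (X n)ᵀ) := by
      rw [hP]; simp only [Matrix.mul_assoc]
    rw [h1, Matrix.trace_mul_comm]
    have h2 : (((X m)ᵀ * X n) * (X n)ᵀ) * X m
        = ((X m)ᵀ * X n) * ((X m)ᵀ * X n)ᵀ := by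
      rw [Matrix.transpose_mul, Matrix.transpose_transpose]; simp only [Matrix.mul_assoc]
    rw [h2, Matrix.trace_mul_comm, hiso m n hmn, Matrix.trace_smul, Matrix.trace_one,
      Fintype.card_fin, smul_eq_mul]
  rw [Fintype.linearIndependent_iff]
  intro a h
  set S : ℝ := ∑ n, a n with hS
  have key : ∀ m, a m * ((K : ℝ) * (1 - c ^ 2)) + c ^ 2 * K * S = 0 := by
    intro m
    have h0 : ((P m) * ∑ n, a n • P n).trace = 0 := by rw [h, Matrix.mul_zero, Matrix.trace_zero]
    rw [Matrix.mul_sum, Matrix.trace_sum] at h0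
    have h1 : ∀ n ∈ Finset.univ, (P m * a n • P n).trace
        = c ^ 2 * K * a n + (if n = m then a m * ((K : ℝ) * (1 - c ^ 2)) else 0) := by
      intro n _
      rw [Matrix.mul_smul, Matrix.trace_smul, smul_eq_mul]
      by_cases hnm : n = m
      · subst hnm; rw [tr_same, if_pos rfl]; ring
      · rw [tr_diff m n (Ne.symm hnm), if_neg hnm]; ring
    rw [Finset.sum_congr rfl h1, Finset.sum_add_distrib, Finset.sum_ite_eq',
      if_pos (Finset.mem_univ m), ← Finset.mul_sum, ← hS] at h0
    linarith [h0]
  have hc2 : c ^ 2 < 1 := by nlinarith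
  have hSsum : S * ((K : ℝ) * (1 - c ^ 2)) + (N : ℝ) * (c ^ 2 * K * S) = 0 := by
    have := Finset.sum_congr rfl (fun m (_ : m ∈ Finset.univ) => key m)
    rw [Finset.sum_add_distrib, Finset.sum_const, ← Finset.sum_mul, ← hS] at this
    simpa [Finset.card_univ, nsmul_eq_mul] using this
  have hS0 : S = 0 := by
    have hfac : (K : ℝ) * ((1 - c ^ 2) + (N : ℝ) * c ^ 2) > 0 := by
      have hKpos : (0 : ℝ) < K := by exact_mod_cast hK
      have : (0:ℝ) ≤ (N : ℝ) * c ^ 2 := by positivity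
      nlinarith
    have : S * ((K : ℝ) * ((1 - c ^ 2) + (N : ℝ) * c ^ 2)) = 0 := by
      ring_nf; ring_nf at hSsum; linarith
    exact (mul_eq_zero.mp this).resolve_right (ne_of_gt hfac)
  intro m
  have hkm := key m
  rw [hS0] at hkm
  have hKpos : (0 : ℝ) < K := by exact_mod_cast hK
  have ham : a m * ((K : ℝ) * (1 - c ^ 2)) = 0 := by linarith
  rcases mul_eq_zero.mp ham with h' | h'
  · exact h'
  · nlinarith

/-- **Lemmens–Seidel bound (real case)**: an equi-isoclinic family of `N` subspaces of
`ℝ^d`, each of dimension `K` (all cross-products `X_mᵀ X_n`, `m ≠ n`, satisfying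
`(X_mᵀ X_n)ᵀ (X_mᵀ X_n) = c² I_K` for a common constant `0 ≤ c < 1`), has
`N ≤ d(d+1)/2 − K(K+1)/2 + 1`. -/
theorem lemmens_seidel_real (d K N : ℕ) (hd : 0 < d) (hK : 0 < K) (hKd : K ≤ d)
    (hN : 0 < N) (X : Fin N → Matrix (Fin d) (Fin K) ℝ)
    (hX : ∀ n, (X n)ᵀ * X n = 1)
    (c : ℝ) (hc0 : 0 ≤ c) (hc1 : c < 1)
    (hiso : ∀ m n : Fin N, m ≠ n →
      ((X m)ᵀ * X n)ᵀ * ((X m)ᵀ * X n) = (c ^ 2) • (1 : Matrix (Fin K) (Fin K) ℝ)) :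
    (N : ℝ) ≤ (d : ℝ) * ((d : ℝ) + 1) / 2 - (K : ℝ) * ((K : ℝ) + 1) / 2 + 1 := by
  classical
  set n0 : Fin N := ⟨0, hN⟩ with hn0
  set φ : Matrix (Fin d) (Fin d) ℝ →ₗ[ℝ] Matrix (Fin K) (Fin K) ℝ :=
    { toFun := fun S => (X n0)ᵀ * S * X n0
      map_add' := fun A B => by rw [Matrix.mul_add, Matrix.add_mul]
      map_smul' := fun r A => by rw [Matrix.mul_smul, Matrix.smul_mul]; rfl } with hφ
  set ψ : (SymIx d → ℝ) →ₗ[ℝ] (SymIx K → ℝ) :=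
    (symCo K).comp (φ.comp (symMk d)) with hψ
  -- projections, transported to the model space
  set p : Fin N → (SymIx d → ℝ) := fun n => symCo d (X n * (X n)ᵀ) with hpdef
  have hsymP : ∀ n, (X n * (X n)ᵀ)ᵀ = X n * (X n)ᵀ := fun n => by
    rw [Matrix.transpose_mul, Matrix.transpose_transpose]
  have hmkp : ∀ n, symMk d (p n) = X n * (X n)ᵀ := fun n => symMk_symCo d (hsymP n)
  have hp : LinearIndependent ℝ p := by
    apply LinearIndependent.of_comp (symMk d)
    have : (⇑(symMk d) ∘ p) = fun n => X n * (X n)ᵀ := funext fun n => hmkp n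
    rw [this]
    exact proj_indep d K N hK X hX c hc0 hc1 hiso
  set W : Submodule ℝ (SymIx d → ℝ) := Submodule.span ℝ (Set.range p) with hWdef
  have hWrank : finrank ℝ W = N := by rw [hWdef, finrank_span_eq_card hp, Fintype.card_fin]
  -- ψ is surjective
  have hsurj : Function.Surjective ψ := by
    intro g
    refine ⟨symCo d (X n0 * symMk K g * (X n0)ᵀ), ?_⟩
    have hsym : (X n0 * symMk K g * (X n0)ᵀ)ᵀ = X n0 * symMk K g * (X n0)ᵀ := by
      rw [Matrix.transpose_mul, Matrix.transpose_mul, Matrix.transpose_transpose,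
        symMk_transpose]
      simp only [Matrix.mul_assoc]
    have h1 : ψ (symCo d (X n0 * symMk K g * (X n0)ᵀ))
        = symCo K ((X n0)ᵀ * (X n0 * symMk K g * (X n0)ᵀ) * X n0) := by
      rw [hψ]
      simp only [LinearMap.comp_apply]
      rw [symMk_symCo d hsym]
      rfl
    rw [h1]
    have h2 : (X n0)ᵀ * (X n0 * symMk K g * (X n0)ᵀ) * X n0
        = ((X n0)ᵀ * X n0) * (symMk K g * ((X n0)ᵀ * X n0)) := by
      simp only [Matrix.mul_assoc]
    rw [h2, hX n0, Matrix.one_mul, Matrix.mul_one, symCo_symMk]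
  -- values of ψ on the projections
  have hone : symCo K (1 : Matrix (Fin K) (Fin K) ℝ) ≠ 0 := by
    intro h0
    have := congrFun h0 ⟨(⟨0, hK⟩, ⟨0, hK⟩), le_refl _⟩
    simp only [symCo, LinearMap.coe_mk, AddHom.coe_mk, Pi.zero_apply] at this
    change (1 : Matrix (Fin K) (Fin K) ℝ) (⟨0, hK⟩ : Fin K) ⟨0, hK⟩ = 0 at this
    rw [Matrix.one_apply_eq] at this
    exact one_ne_zero this
  have hψp : ∀ n, ψ (p n) ∈ Submodule.span ℝ {symCo K (1 : Matrix (Fin K) (Fin K) ℝ)} := by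
    intro n
    have hbase : ψ (p n) = symCo K ((X n0)ᵀ * (X n * (X n)ᵀ) * X n0) := by
      rw [hψ]
      simp only [LinearMap.comp_apply]
      rw [hmkp n]
      rfl
    by_cases hn : n = n0
    · have hval : (X n0)ᵀ * (X n0 * (X n0)ᵀ) * X n0 = 1 := by
        calc (X n0)ᵀ * (X n0 * (X n0)ᵀ) * X n0
            = ((X n0)ᵀ * X n0) * ((X n0)ᵀ * X n0) := by simp only [Matrix.mul_assoc]
          _ = 1 := by rw [hX n0, one_mul]
      rw [hbase, hn, hval]
      exact Submodule.mem_span_singleton_self _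
    · have hne : n0 ≠ n := fun h => hn h.symm
      have hval : (X n0)ᵀ * (X n * (X n)ᵀ) * X n0 = (c ^ 2) • 1 := by
        have h1 : (X n0)ᵀ * (X n * (X n)ᵀ) * X n0
            = ((X n0)ᵀ * X n) * ((X n0)ᵀ * X n)ᵀ := by
          rw [Matrix.transpose_mul, Matrix.transpose_transpose]
          simp only [Matrix.mul_assoc]
        rw [h1]
        exact mul_transpose_of_transpose_mul (hiso n0 n hne)
      rw [hbase, hval, map_smul]
      exact Submodule.mem_span_singleton.mpr ⟨c ^ 2, rfl⟩
  -- range bound for the restriction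
  have hrange : LinearMap.range (ψ.domRestrict W)
      ≤ Submodule.span ℝ {symCo K (1 : Matrix (Fin K) (Fin K) ℝ)} := by
    rw [LinearMap.range_domRestrict, hWdef, Submodule.map_span, Submodule.span_le]
    rintro _ ⟨_, ⟨n, rfl⟩, rfl⟩
    exact hψp n
  have hrank1 : finrank ℝ (LinearMap.range (ψ.domRestrict W)) ≤ 1 := by
    calc finrank ℝ (LinearMap.range (ψ.domRestrict W))
        ≤ finrank ℝ (Submodule.span ℝ {symCo K (1 : Matrix (Fin K) (Fin K) ℝ)}) :=
          Submodule.finrank_mono hrange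
      _ = 1 := finrank_span_singleton hone
  clear_value n0 φ ψ p W
  -- kernel bound
  have hker : finrank ℝ (LinearMap.ker (ψ.domRestrict W)) ≤ finrank ℝ (LinearMap.ker ψ) := by
    rw [LinearMap.ker_domRestrict]
    rw [(W.equivSubtypeMap (Submodule.comap W.subtype (LinearMap.ker ψ))).finrank_eq]
    exact Submodule.finrank_mono (Submodule.map_comap_le _ _)
  have hrn1 := LinearMap.finrank_range_add_finrank_ker (ψ.domRestrict W)
  have hrn2 := LinearMap.finrank_range_add_finrank_ker ψ
  rw [hWrank] at hrn1
  have hrngψ : finrank ℝ (LinearMap.range ψ) = Fintype.card (SymIx K) := by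
    rw [LinearMap.range_eq_top.mpr hsurj, finrank_top, Module.finrank_pi]
  have hdomψ : finrank ℝ (SymIx d → ℝ) = Fintype.card (SymIx d) := Module.finrank_pi ℝ
  rw [hrngψ, hdomψ] at hrn2
  -- put together in ℕ
  have hNat : N + Fintype.card (SymIx K) ≤ 1 + Fintype.card (SymIx d) := by omega
  have h2d := card_pairs d
  have h2K := card_pairs K
  have hcast : (N : ℝ) + (Fintype.card (SymIx K) : ℝ) ≤ 1 + (Fintype.card (SymIx d) : ℝ) := by
    exact_mod_cast hNat
  have hcd : 2 * (Fintype.card (SymIx d) : ℝ) = (d : ℝ) * ((d : ℝ) + 1) := by exact_mod_cast h2d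
  have hcK : 2 * (Fintype.card (SymIx K) : ℝ) = (K : ℝ) * ((K : ℝ) + 1) := by exact_mod_cast h2K
  linarith
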